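/- Let R(s) = Σ_{i=1}^n R_i(s) e^{-h_i s} where each R_i is a rational function with real coefficients, bounded and analytic on the closed right half-plane, with 0 ≤ h_1 < h_2 < ⋯ < h_n, and suppose the relative degree d_1 of R_1 equals max{d_2,…,d_n} (neutral type) and R_1 is not identically zero. Set ξ_i = lim_{ω→∞} R_i(jω)/R_1(jω) for i = 2,…,n. If the polynomial φ(r) = 1 + Σ_{i=2}^n ξ_i r^{h_i − h_1} (where all h_i are assumed to be nonnegative integers) has all its roots of modulus strictly greater than 1, then there exists σ_0 > 0 and ω_0 > 0 such that R(σ + jω) ≠ 0 for all 0 ≤ σ ≤ σ_0 and |ω| ≥ ω_0. -/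

import Mathlib

open Complex Polynomial Filter Finset

/-- The `i`-th rational term `R_i(s) = p_i(s)/q_i(s)` viewed as a function on `ℂ`. -/
noncomputable def ratTerm {n : ℕ} (p q : Fin n → Polynomial ℝ) (i : Fin n) (s : ℂ) : ℂ :=
  ((p i).map (algebraMap ℝ ℂ)).eval s / ((q i).map (algebraMap ℝ ℂ)).eval s

/-- The delay system `R(s) = ∑ᵢ R_i(s) e^{-h_i s}` with integer delays. -/
noncomputable def delaySys {n : ℕ} (p q : Fin n → Polynomial ℝ) (h : Fin n → ℕ) (s : ℂ) : ℂ :=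
  ∑ i : Fin n, ratTerm p q i s * Complex.exp (-(h i : ℂ) * s)

private lemma ev_ne_aux (P : Polynomial ℂ) (hP : P ≠ 0) :
    ∀ᶠ s : ℂ in Bornology.cobounded ℂ, P.eval s ≠ 0 := by
  have hle : Bornology.cobounded ℂ ≤ cofinite :=
    Metric.cobounded_eq_cocompact (α := ℂ) ▸ Filter.cocompact_le_cofinite
  exact Eventually.filter_mono hle
    ((Polynomial.finite_setOf_isRoot hP).eventually_cofinite_notMem.mono fun x hx => hx)

private lemma tendsto_eval_div_pow_aux (P : Polynomial ℂ) (k : ℕ) (hk : P.natDegree ≤ k) :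
    Tendsto (fun s : ℂ => P.eval s / s ^ k) (Bornology.cobounded ℂ) (nhds (P.coeff k)) := by
  have h1 : Tendsto (fun s : ℂ => ∑ j ∈ Finset.range (k + 1), P.coeff j * (s⁻¹) ^ (k - j))
      (Bornology.cobounded ℂ)
      (nhds (∑ j ∈ Finset.range (k + 1), P.coeff j * (0 : ℂ) ^ (k - j))) :=
    tendsto_finset_sum _ fun j _ =>
      ((tendsto_inv₀_cobounded.pow (k - j)).const_mul _)
  have hval : (∑ j ∈ Finset.range (k + 1), P.coeff j * (0 : ℂ) ^ (k - j)) = P.coeff k := by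
    rw [Finset.sum_eq_single k]
    · simp
    · intro j hj hne
      rw [Finset.mem_range, Nat.lt_succ_iff] at hj
      have : 0 < k - j := Nat.sub_pos_of_lt (lt_of_le_of_ne hj hne)
      rw [zero_pow this.ne', mul_zero]
    · intro hk'; exact absurd (Finset.self_mem_range_succ k) hk'
  rw [hval] at h1
  refine h1.congr' ?_
  filter_upwards [Bornology.eventually_ne_cobounded (0 : ℂ)] with s hs
  rw [Polynomial.eval_eq_sum_range' (Nat.lt_succ_of_le hk), Finset.sum_div]
  refine Finset.sum_congr rfl fun j hj => ?_
  rw [Finset.mem_range, Nat.lt_succ_iff] at hj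
  rw [mul_div_assoc]
  congr 1
  have hsk : s ^ k = s ^ j * s ^ (k - j) := by rw [← pow_add, Nat.add_sub_cancel' hj]
  rw [inv_pow, hsk, div_mul_cancel_left₀ (pow_ne_zero _ hs)]

private lemma tendsto_eval_div_aux (P Q : Polynomial ℂ) (hQ : Q ≠ 0)
    (hdeg : P.natDegree ≤ Q.natDegree) :
    Tendsto (fun s : ℂ => P.eval s / Q.eval s) (Bornology.cobounded ℂ)
      (nhds (P.coeff Q.natDegree / Q.coeff Q.natDegree)) := by
  have hQl : Q.coeff Q.natDegree ≠ 0 := by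
    rw [← Polynomial.leadingCoeff]
    exact Polynomial.leadingCoeff_ne_zero.mpr hQ
  have h := (tendsto_eval_div_pow_aux P _ hdeg).div (tendsto_eval_div_pow_aux Q _ le_rfl) hQl
  refine h.congr' ?_
  filter_upwards [Bornology.eventually_ne_cobounded (0 : ℂ)] with s hs
  simp only [Pi.div_apply]
  rcases eq_or_ne (Q.eval s) 0 with hq | hq
  · simp [hq]
  · field_simp

private lemma axis_tendsto_cobounded :
    Tendsto (fun ω : ℝ => (Complex.I * ω : ℂ)) atTop (Bornology.cobounded ℂ) := by
  rw [(Metric.hasBasis_cobounded_compl_closedBall (0 : ℂ)).tendsto_right_iff]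
  intro r _
  filter_upwards [eventually_gt_atTop r, eventually_gt_atTop 0] with ω h1 h2
  simp only [Set.mem_compl_iff, Metric.mem_closedBall, Complex.dist_eq, sub_zero, not_le,
    norm_mul, Complex.norm_I, Complex.norm_real, Real.norm_eq_abs, one_mul]
  rw [abs_of_pos h2]
  exact h1

private lemma tendsto_eval_div_of_axis_aux (P Q : Polynomial ℂ) (hQ : Q ≠ 0) (L : ℂ)
    (hl : Tendsto (fun ω : ℝ => P.eval (Complex.I * ω) / Q.eval (Complex.I * ω)) atTop
      (nhds L)) :
    Tendsto (fun s : ℂ => P.eval s / Q.eval s) (Bornology.cobounded ℂ) (nhds L) := by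
  rcases le_or_gt P.natDegree Q.natDegree with hdeg | hdeg
  · have h2 := tendsto_eval_div_aux P Q hQ hdeg
    have heq := tendsto_nhds_unique hl (h2.comp axis_tendsto_cobounded)
    rwa [heq]
  · exfalso
    have hP : P ≠ 0 := by
      intro h0
      rw [h0, Polynomial.natDegree_zero] at hdeg
      exact Nat.not_lt_zero _ hdeg
    have h2 := (tendsto_eval_div_aux Q P hP hdeg.le).comp axis_tendsto_cobounded
    have hcoeff : Q.coeff P.natDegree = 0 := Polynomial.coeff_eq_zero_of_natDegree_lt hdeg
    rw [hcoeff, zero_div] at h2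
    have h3 : Tendsto (fun ω : ℝ =>
        (P.eval (Complex.I * ω) / Q.eval (Complex.I * ω)) *
          (Q.eval (Complex.I * ω) / P.eval (Complex.I * ω))) atTop (nhds (L * 0)) :=
      hl.mul h2
    have h4 : Tendsto (fun ω : ℝ =>
        (P.eval (Complex.I * ω) / Q.eval (Complex.I * ω)) *
          (Q.eval (Complex.I * ω) / P.eval (Complex.I * ω))) atTop (nhds 1) := by
      refine tendsto_const_nhds.congr' ?_
      filter_upwards [axis_tendsto_cobounded.eventually (ev_ne_aux P hP),
        axis_tendsto_cobounded.eventually (ev_ne_aux Q hQ)] with ω h1 h2'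
      field_simp
    have := tendsto_nhds_unique h3 h4
    rw [mul_zero] at this
    exact zero_ne_one this

private lemma divdiv_aux (a b c d : ℂ) (hb : b ≠ 0) (hd : d ≠ 0) :
    (a / b) / (c / d) = (a * d) / (b * c) := by
  rcases eq_or_ne c 0 with rfl | hc
  · simp
  · field_simp

/-- for a neutral-type delay system whose associated polynomial
`φ(r) = 1 + ∑_{i≥2} ξ_i r^{h_i - h_1}` has all roots of modulus `> 1`, the zeros of `R`
avoid the part of the strip `0 ≤ Re s ≤ σ₀` with `|Im s| ≥ ω₀`. -/
theorem stmt1 (n : ℕ) (hn : 0 < n) (p q : Fin n → Polynomial ℝ) (h : Fin n → ℕ)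
    (i0 : Fin n) (hi0 : i0 = ⟨0, hn⟩)
    (hmono : StrictMono h)
    (hstable : ∀ i, ∀ z : ℂ, 0 ≤ z.re → ((q i).map (algebraMap ℝ ℂ)).eval z ≠ 0)
    (hproper : ∀ i, (p i).natDegree ≤ (q i).natDegree)
    (hp1 : p i0 ≠ 0)
    (d : Fin n → ℕ) (hd : ∀ i, d i = (q i).natDegree - (p i).natDegree)
    (hneutral : d i0 = (Finset.univ.erase i0).sup d)
    (ξ : Fin n → ℂ)
    (hξ : ∀ i, Tendsto (fun ω : ℝ => ratTerm p q i (Complex.I * ω) /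
        ratTerm p q i0 (Complex.I * ω)) atTop (nhds (ξ i)))
    (hφ : ∀ r : ℂ, 1 + ∑ i ∈ Finset.univ.erase i0, ξ i * r ^ (h i - h i0) = 0 →
        1 < ‖r‖) :
    ∃ σ₀ > (0 : ℝ), ∃ ω₀ > (0 : ℝ), ∀ σ ω : ℝ, 0 ≤ σ → σ ≤ σ₀ → ω₀ ≤ |ω| →
      delaySys p q h (σ + Complex.I * ω) ≠ 0 := by
  classical
  -- basic facts
  have hh : ∀ i, h i0 ≤ h i := by
    intro i
    refine hmono.monotone ?_
    rw [hi0]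
    exact Fin.le_def.mpr (Nat.zero_le _)
  set Pc : Fin n → Polynomial ℂ := fun i => (p i).map (algebraMap ℝ ℂ) with hPcdef
  set Qc : Fin n → Polynomial ℂ := fun i => (q i).map (algebraMap ℝ ℂ) with hQcdef
  have hQc0 : ∀ i, Qc i ≠ 0 := by
    intro i h0
    apply hstable i 1 (by norm_num)
    show Polynomial.eval 1 (Qc i) = 0
    rw [h0]
    simp
  have hPc0 : Pc i0 ≠ 0 := Polynomial.map_ne_zero hp1
  set N : Fin n → Polynomial ℂ := fun i => Pc i * Qc i0 with hNdef
  set D : Fin n → Polynomial ℂ := fun i => Qc i * Pc i0 with hDdef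
  have hD0 : ∀ i, D i ≠ 0 := fun i => mul_ne_zero (hQc0 i) hPc0
  -- the ratio R_i/R_{i0} tends to ξ i at infinity in ℂ
  have hgξ : ∀ i, Tendsto (fun s : ℂ => (N i).eval s / (D i).eval s)
      (Bornology.cobounded ℂ) (nhds (ξ i)) := by
    intro i
    refine tendsto_eval_div_of_axis_aux _ _ (hD0 i) _ ?_
    refine (hξ i).congr fun ω => ?_
    have hb : (Qc i).eval (Complex.I * ω) ≠ 0 := hstable i _ (by simp [Complex.mul_re])
    have hd' : (Qc i0).eval (Complex.I * ω) ≠ 0 := hstable i0 _ (by simp [Complex.mul_re])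
    simp only [ratTerm, hNdef, hDdef, Polynomial.eval_mul]
    rw [divdiv_aux _ _ _ _ hb hd']
  -- the quasipolynomial φ and its minimum modulus on the closed unit disk
  set φf : ℂ → ℂ := fun r => 1 + ∑ i ∈ Finset.univ.erase i0, ξ i * r ^ (h i - h i0) with hφfdef
  have hcont : Continuous fun r => ‖φf r‖ := by
    refine continuous_norm.comp ?_
    exact continuous_const.add (continuous_finset_sum _ fun i _ =>
      continuous_const.mul (continuous_pow _))
  obtain ⟨r₀, hr₀K, hr₀min'⟩ := (isCompact_closedBall (0 : ℂ) 1).exists_isMinOn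
    (Metric.nonempty_closedBall.mpr zero_le_one) hcont.continuousOn
  have hr₀min := isMinOn_iff.mp hr₀min'
  set c := ‖φf r₀‖ with hcdef
  have hc : 0 < c := by
    have hne : φf r₀ ≠ 0 := by
      intro h0
      have := hφ r₀ h0
      rw [Metric.mem_closedBall, Complex.dist_eq, sub_zero] at hr₀K
      exact absurd hr₀K (not_le.mpr this)
    exact norm_pos_iff.mpr hne
  have hnR : (0 : ℝ) < n := by exact_mod_cast hn
  have hε : 0 < c / (2 * n) := by positivity
  -- eventual closeness
  have hev : ∀ᶠ s : ℂ in Bornology.cobounded ℂ,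
      (∀ i ∈ Finset.univ.erase i0,
        ‖(N i).eval s / (D i).eval s - ξ i‖ ≤ c / (2 * n)) ∧
      (Pc i0).eval s ≠ 0 := by
    refine Eventually.and ?_ (ev_ne_aux _ hPc0)
    rw [eventually_all_finset]
    intro i _
    have := Metric.tendsto_nhds.mp (hgξ i) (c / (2 * n)) hε
    refine this.mono fun s hs => ?_
    rw [Complex.dist_eq] at hs
    exact hs.le
  obtain ⟨R, -, hR⟩ := (Metric.hasBasis_cobounded_compl_closedBall (0 : ℂ)).eventually_iff.mp hev
  refine ⟨1, one_pos, max R 0 + 1, by positivity, ?_⟩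
  intro σ ω hσ0 hσ1 hω
  set s : ℂ := (σ : ℂ) + Complex.I * ω with hsdef
  have hre : s.re = σ := by simp [hsdef]
  have him : s.im = ω := by simp [hsdef]
  have habs : R < ‖s‖ := by
    have h1 : |ω| ≤ ‖s‖ := him ▸ Complex.abs_im_le_norm s
    have : R < max R 0 + 1 := lt_of_le_of_lt (le_max_left _ _) (lt_add_one _)
    linarith
  have hsK : s ∈ (Metric.closedBall (0 : ℂ) R)ᶜ := by
    simp only [Set.mem_compl_iff, Metric.mem_closedBall, Complex.dist_eq, sub_zero, not_le]
    exact habs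
  obtain ⟨hNi, hPs⟩ := hR hsK
  have hqs : ∀ i, (Qc i).eval s ≠ 0 := fun i => hstable i s (hre ▸ hσ0)
  set r : ℂ := Complex.exp (-s) with hrdef
  have habs_r : ‖r‖ ≤ 1 := by
    rw [hrdef, Complex.norm_exp]
    rw [Real.exp_le_one_iff]
    simp [hre, hσ0]
  -- factorization
  have hexp : ∀ i : Fin n, Complex.exp (-(h i : ℂ) * s) =
      Complex.exp (-(h i0 : ℂ) * s) * r ^ (h i - h i0) := by
    intro i
    rw [hrdef, ← Complex.exp_nat_mul, ← Complex.exp_add]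
    congr 1
    have hcast : (h i : ℂ) = (h i0 : ℂ) + ((h i - h i0 : ℕ) : ℂ) := by
      rw [← Nat.cast_add, Nat.add_sub_cancel' (hh i)]
    rw [hcast]
    ring
  have hterm : ∀ i : Fin n, ratTerm p q i s =
      ((N i).eval s / (D i).eval s) * ratTerm p q i0 s := by
    intro i
    simp only [ratTerm, hNdef, hDdef, Polynomial.eval_mul, ← hPcdef, ← hQcdef]
    rw [div_mul_div_comm]
    rw [div_eq_div_iff (hqs i) (mul_ne_zero (mul_ne_zero (hqs i) hPs) (hqs i0))]
    ring
  have hsum : delaySys p q h s = Complex.exp (-(h i0 : ℂ) * s) * ratTerm p q i0 s *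
      (∑ i : Fin n, ((N i).eval s / (D i).eval s) * r ^ (h i - h i0)) := by
    unfold delaySys
    rw [Finset.mul_sum]
    refine Finset.sum_congr rfl fun i _ => ?_
    rw [hexp i, hterm i]
    ring
  have hgi0 : (N i0).eval s / (D i0).eval s = 1 := by
    simp only [hNdef, hDdef, Polynomial.eval_mul]
    rw [mul_comm ((Qc i0).eval s)]
    exact div_self (mul_ne_zero hPs (hqs i0))
  have hsplit : (∑ i : Fin n, ((N i).eval s / (D i).eval s) * r ^ (h i - h i0)) =
      φf r + ∑ i ∈ Finset.univ.erase i0,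
        (((N i).eval s / (D i).eval s) - ξ i) * r ^ (h i - h i0) := by
    rw [← Finset.add_sum_erase _ _ (Finset.mem_univ i0), hgi0, Nat.sub_self, pow_zero, one_mul]
    have hcongr : ∀ i ∈ Finset.univ.erase i0,
        ((N i).eval s / (D i).eval s) * r ^ (h i - h i0) =
        ξ i * r ^ (h i - h i0) +
          (((N i).eval s / (D i).eval s) - ξ i) * r ^ (h i - h i0) := fun i _ => by ring
    rw [Finset.sum_congr rfl hcongr, Finset.sum_add_distrib, hφfdef]
    ring
  -- bound the error
  have herr : ‖∑ i ∈ Finset.univ.erase i0,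
      (((N i).eval s / (D i).eval s) - ξ i) * r ^ (h i - h i0)‖ ≤ c / 2 := by
    refine le_trans (norm_sum_le _ _) ?_
    have hbound : ∀ i ∈ Finset.univ.erase i0,
        ‖(((N i).eval s / (D i).eval s) - ξ i) * r ^ (h i - h i0)‖ ≤ c / (2 * n) := by
      intro i hi
      rw [norm_mul, norm_pow]
      calc ‖(N i).eval s / (D i).eval s - ξ i‖ * ‖r‖ ^ (h i - h i0)
          ≤ (c / (2 * n)) * 1 := by
            refine mul_le_mul (hNi i hi) ?_ (by positivity) hε.le
            exact pow_le_one₀ (norm_nonneg _) habs_r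
        _ = c / (2 * n) := mul_one _
    refine le_trans (Finset.sum_le_sum hbound) ?_
    rw [Finset.sum_const, nsmul_eq_mul]
    have hcard : ((Finset.univ.erase i0).card : ℝ) ≤ n := by
      have := Finset.card_erase_le (a := i0) (s := (Finset.univ : Finset (Fin n)))
      have h2 : (Finset.univ : Finset (Fin n)).card = n := Finset.card_univ.trans (Fintype.card_fin n)
      exact_mod_cast le_trans this (le_of_eq h2)
    calc ((Finset.univ.erase i0).card : ℝ) * (c / (2 * n)) ≤ n * (c / (2 * n)) := by
          exact mul_le_mul_of_nonneg_right hcard hε.le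
      _ = c / 2 := by field_simp
  have hφr : c ≤ ‖φf r‖ := by
    refine hr₀min r ?_
    rw [Metric.mem_closedBall, Complex.dist_eq, sub_zero]
    exact habs_r
  have hT : φf r + (∑ i ∈ Finset.univ.erase i0,
      (((N i).eval s / (D i).eval s) - ξ i) * r ^ (h i - h i0)) ≠ 0 := by
    intro h0
    have h1 : φf r = -(∑ i ∈ Finset.univ.erase i0,
        (((N i).eval s / (D i).eval s) - ξ i) * r ^ (h i - h i0)) :=
      eq_neg_of_add_eq_zero_left h0
    have h2 : ‖φf r‖ ≤ c / 2 := by rw [h1, norm_neg]; exact herr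
    linarith
  rw [hsum, hsplit]
  exact mul_ne_zero (mul_ne_zero (Complex.exp_ne_zero _)
    (div_ne_zero hPs (hqs i0))) hT
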